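/- Let G = G_1 ⊕_k G_2 be a k-edge sum of graphs G_1 and G_2, and let t > k. If G admits a weak immersion of K_t, then G_1 or G_2 admits a weak immersion of K_t. -/

import Mathlib

open Sym2

/-- A finite multigraph: finite vertex and edge types, each edge has an
unordered pair of endpoints, and there are no loops. -/
structure Multigraph where
  V : Type
  E : Type
  finV : Finite V
  finE : Finite E
  ends : E → Sym2 V
  no_loops : ∀ e, ¬ (ends e).IsDiag

attribute [instance] Multigraph.finV Multigraph.finE

namespace Multigraph

/-- `IsWalk G vs es`: `vs` is the vertex sequence and `es` the edge sequence of a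
walk in `G`. -/
inductive IsWalk (G : Multigraph) : List G.V → List G.E → Prop
  | nil (v : G.V) : IsWalk G [v] []
  | cons {v : G.V} {vs : List G.V} {es : List G.E} (u : G.V) (e : G.E)
      (he : G.ends e = s(u, v)) (hw : IsWalk G (v :: vs) es) :
      IsWalk G (u :: v :: vs) (e :: es)

/-- A path from `a` to `b` in the multigraph `G`, given by its vertex sequence `vs`
and edge sequence `es`. -/
def IsPathBetween (G : Multigraph) (a b : G.V) (vs : List G.V) (es : List G.E) : Prop :=
  G.IsWalk vs es ∧ vs.Nodup ∧ vs.head? = some a ∧ vs.getLast? = some b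

/-- A weak immersion of `H` into `G`. -/
structure WeakImmersion (H G : Multigraph) where
  vmap : H.V → G.V
  vmap_inj : Function.Injective vmap
  pverts : H.E → List G.V
  pedges : H.E → List G.E
  is_path : ∀ f : H.E, ∃ x y : H.V, H.ends f = s(x, y) ∧
    G.IsPathBetween (vmap x) (vmap y) (pverts f) (pedges f)
  edge_disjoint : ∀ f f' : H.E, f ≠ f' → ∀ e, e ∈ pedges f → e ∉ pedges f'

/-- `G.Immerses H`: `G` admits a weak immersion of `H`. -/
def Immerses (G H : Multigraph) : Prop := Nonempty (WeakImmersion H G)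

/-- The degree of a vertex: the number of edges incident with it. -/
noncomputable def degree (G : Multigraph) (v : G.V) : ℕ :=
  Nat.card {e : G.E // v ∈ G.ends e}

/-- The edge cut `δ(U)`: edges with exactly one endpoint in `U`. -/
def edgeCut (G : Multigraph) (U : Set G.V) : Set G.E :=
  {e | ∃ a b, G.ends e = s(a, b) ∧ a ∈ U ∧ b ∉ U}

/-- There exist `k` pairwise edge-disjoint paths from `a` to `b` in `G`. -/
def EdgeDisjointPaths (G : Multigraph) (a b : G.V) (k : ℕ) : Prop :=
  ∃ (vs : Fin k → List G.V) (es : Fin k → List G.E),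
    (∀ i, G.IsPathBetween a b (vs i) (es i)) ∧
    ∀ i j, i ≠ j → ∀ e, e ∈ es i → e ∉ es j

/-- Isomorphism of multigraphs. -/
structure Iso (G H : Multigraph) where
  vmap : G.V ≃ H.V
  emap : G.E ≃ H.E
  ends_map : ∀ e, H.ends (emap e) = Sym2.map vmap (G.ends e)

/-- The complete graph `K_t` as a multigraph. -/
def completeGraph (t : ℕ) : Multigraph where
  V := Fin t
  E := {p : Sym2 (Fin t) // ¬ p.IsDiag}
  finV := inferInstance
  finE := inferInstance
  ends := Subtype.val
  no_loops := fun e => e.prop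

/-- The multigraph `S_{k,n}`: vertices `x_1, …, x_n, y` (with `y = none`) and `k`
parallel edges from each `x_i` to `y`. -/
def star (k n : ℕ) : Multigraph where
  V := Option (Fin n)
  E := Fin n × Fin k
  finV := inferInstance
  finE := inferInstance
  ends := fun p => s(some p.1, none)
  no_loops := fun p => by simp [Sym2.mk_isDiag_iff]

/-! ### Edge sums -/

/-- A witness that `G` is a `k`-edge sum of `G₁` and `G₂`. -/
structure EdgeSumWitness (k : ℕ) (G G₁ G₂ : Multigraph) where
  v₁ : G₁.V
  v₂ : G₂.V
  deg₁ : G₁.degree v₁ = k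
  deg₂ : G₂.degree v₂ = k
  π : {e : G₁.E // v₁ ∈ G₁.ends e} ≃ {e : G₂.E // v₂ ∈ G₂.ends e}
  α : G.V ≃ {x : G₁.V // x ≠ v₁} ⊕ {y : G₂.V // y ≠ v₂}
  β : G.E ≃ ({e : G₁.E // v₁ ∉ G₁.ends e} ⊕ {e : G₂.E // v₂ ∉ G₂.ends e}) ⊕
      {e : G₁.E // v₁ ∈ G₁.ends e}
  ends₁ : ∀ (e : {e : G₁.E // v₁ ∉ G₁.ends e}) (x y : G₁.V) (hx : x ≠ v₁) (hy : y ≠ v₁),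
    G₁.ends e.val = s(x, y) →
      G.ends (β.symm (Sum.inl (Sum.inl e))) = s(α.symm (Sum.inl ⟨x, hx⟩), α.symm (Sum.inl ⟨y, hy⟩))
  ends₂ : ∀ (e : {e : G₂.E // v₂ ∉ G₂.ends e}) (x y : G₂.V) (hx : x ≠ v₂) (hy : y ≠ v₂),
    G₂.ends e.val = s(x, y) →
      G.ends (β.symm (Sum.inl (Sum.inr e))) = s(α.symm (Sum.inr ⟨x, hx⟩), α.symm (Sum.inr ⟨y, hy⟩))
  ends₃ : ∀ (e : {e : G₁.E // v₁ ∈ G₁.ends e}) (x : G₁.V) (y : G₂.V) (hx : x ≠ v₁) (hy : y ≠ v₂),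
    G₁.ends e.val = s(x, v₁) → G₂.ends (π e).val = s(y, v₂) →
      G.ends (β.symm (Sum.inr e)) = s(α.symm (Sum.inl ⟨x, hx⟩), α.symm (Sum.inr ⟨y, hy⟩))

/-- `G` is a `k`-edge sum of `G₁` and `G₂`. -/
def IsEdgeSum (k : ℕ) (G G₁ G₂ : Multigraph) : Prop :=
  Nonempty (EdgeSumWitness k G G₁ G₂)

/-- The edge sum is grounded. -/
def EdgeSumWitness.Grounded {k : ℕ} {G G₁ G₂ : Multigraph}
    (w : EdgeSumWitness k G G₁ G₂) : Prop :=
  (∃ v', v' ≠ w.v₁ ∧ G₁.EdgeDisjointPaths w.v₁ v' k) ∧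
  (∃ v', v' ≠ w.v₂ ∧ G₂.EdgeDisjointPaths w.v₂ v' k)

/-- `G` is a grounded `k`-edge sum of `G₁` and `G₂`. -/
def IsGroundedEdgeSum (k : ℕ) (G G₁ G₂ : Multigraph) : Prop :=
  ∃ w : EdgeSumWitness k G G₁ G₂, w.Grounded

/-! ### Auxiliary simple-graph operations -/

/-- Delete the vertex `t` from `T` (keeping it as an isolated vertex). -/
def delAt {τ : Type} (T : SimpleGraph τ) (t : τ) : SimpleGraph τ where
  Adj a b := T.Adj a b ∧ a ≠ t ∧ b ≠ t
  symm := ⟨fun a b h => ⟨h.1.symm, h.2.2, h.2.1⟩⟩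
  loopless := ⟨fun a h => T.loopless.irrefl a h.1⟩

lemma reach_delAt {τ : Type} (T : SimpleGraph τ) (t : τ) {a b : τ} (q : T.Walk a b)
    (ht : t ∉ q.support) : (delAt T t).Reachable a b := by
  induction q with
  | nil => exact SimpleGraph.Reachable.refl _
  | @cons u v w h p ih =>
      simp only [SimpleGraph.Walk.support_cons, List.mem_cons] at ht
      push_neg at ht
      have hv : v ≠ t := fun hv => ht.2 (hv ▸ p.start_mem_support)
      exact (SimpleGraph.Adj.reachable (G := delAt T t) (show T.Adj u v ∧ u ≠ t ∧ v ≠ t from ⟨h, Ne.symm ht.1, hv⟩)).trans (ih ht.2)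

/-! ### Tree-cut decompositions -/

/-- A tree-cut decomposition of the multigraph `G`. -/
structure TreeCutDecomp (G : Multigraph) where
  T : Type
  finT : Finite T
  tree : SimpleGraph T
  isTree : tree.IsTree
  bag : T → Set G.V
  disj : ∀ s t : T, s ≠ t → Disjoint (bag s) (bag t)
  covers : ∀ v : G.V, ∃ t : T, v ∈ bag t

attribute [instance] TreeCutDecomp.finT

variable {G : Multigraph}

/-- The union of the bags on the `v`-side of the tree edge `uv`. -/
def TreeCutDecomp.sideSet (D : TreeCutDecomp G) (u v : D.T) : Set G.V :=
  {x | ∃ s, (D.tree.deleteEdges {s(u, v)}).Reachable v s ∧ x ∈ D.bag s}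

/-- The adhesion of a tree-cut decomposition. -/
noncomputable def TreeCutDecomp.adhesion (D : TreeCutDecomp G) : ℕ :=
  sSup {n | ∃ u v : D.T, D.tree.Adj u v ∧ n = (G.edgeCut (D.sideSet u v)).ncard}

lemma TreeCutDecomp.exists_periph (D : TreeCutDecomp G) (t : D.T) (v : G.V)
    (hv : v ∉ D.bag t) :
    ∃ u : D.T, D.tree.Adj t u ∧ ∃ s, v ∈ D.bag s ∧ (delAt D.tree t).Reachable s u := by
  classical
  obtain ⟨s, hs⟩ := D.covers v
  have hst : t ≠ s := fun h => hv (h ▸ hs)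
  obtain ⟨w⟩ := D.isTree.isConnected.preconnected t s
  obtain ⟨x, hadj, q, hq⟩ := SimpleGraph.Walk.exists_eq_cons_of_ne hst w.toPath.val
  have hP : (SimpleGraph.Walk.cons hadj q).IsPath := hq ▸ w.toPath.prop
  rw [SimpleGraph.Walk.cons_isPath_iff] at hP
  exact ⟨x, hadj, s, hs, (reach_delAt D.tree t q hP.2).symm⟩

open Classical in
/-- The map from `G` to the vertices of the torso at `t`. -/
noncomputable def TreeCutDecomp.proj (D : TreeCutDecomp G) (t : D.T) (v : G.V) :
    ↥(D.bag t) ⊕ {u : D.T // D.tree.Adj t u} :=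
  if hv : v ∈ D.bag t then Sum.inl ⟨v, hv⟩
  else Sum.inr ⟨(D.exists_periph t v hv).choose, (D.exists_periph t v hv).choose_spec.1⟩

/-- The torso of `G` at a node `t` of a tree-cut decomposition. -/
noncomputable def TreeCutDecomp.torso (D : TreeCutDecomp G) (t : D.T) : Multigraph where
  V := ↥(D.bag t) ⊕ {u : D.T // D.tree.Adj t u}
  E := {e : G.E // ¬ (Sym2.map (D.proj t) (G.ends e)).IsDiag}
  finV := inferInstance
  finE := inferInstance
  ends := fun e => Sym2.map (D.proj t) (G.ends e.val)
  no_loops := fun e => e.prop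

/-- The core vertices of the torso at `t`. -/
def TreeCutDecomp.torsoCore (D : TreeCutDecomp G) (t : D.T) : Set (D.torso t).V :=
  Set.range Sum.inl

/-! ### The 3-center and tree-cut width -/

/-- Condition (1): the immersion of `H` in `G` covers `X` and every vertex of `H`
of degree at most two is mapped into `X`. -/
def CenterCond (G : Multigraph) (X : Set G.V) (H : Multigraph) (I : WeakImmersion H G) : Prop :=
  X ⊆ Set.range I.vmap ∧ ∀ x : H.V, H.degree x ≤ 2 → I.vmap x ∈ X

/-- `C` is a 3-center of `(G, X)`: it admits an immersion in `G` satisfying (1) and is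
maximal with respect to immersion containment among all such graphs. -/
def IsThreeCenter (G : Multigraph) (X : Set G.V) (C : Multigraph) : Prop :=
  (∃ I : WeakImmersion C G, CenterCond G X C I) ∧
  ∀ H : Multigraph, (∃ I : WeakImmersion H G, CenterCond G X H I) → C.Immerses H

/-- The number of vertices of the 3-center of `(G, X)`. -/
noncomputable def threeCenterCard (G : Multigraph) (X : Set G.V) : ℕ :=
  sSup {n | ∃ C : Multigraph, IsThreeCenter G X C ∧ Nat.card C.V = n}

/-- The width of a tree-cut decomposition. -/
noncomputable def TreeCutDecomp.width (D : TreeCutDecomp G) : ℕ :=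
  max D.adhesion (sSup {n | ∃ t : D.T, n = threeCenterCard (D.torso t) (D.torsoCore t)})

/-- The tree-cut width of a multigraph. -/
noncomputable def tcw (G : Multigraph) : ℕ :=
  sInf {w | ∃ D : TreeCutDecomp G, D.width = w}

/-! ### Tree decompositions and tree-width -/

/-- A tree decomposition of the multigraph `G`. -/
structure TreeDecomp (G : Multigraph) where
  T : Type
  finT : Finite T
  tree : SimpleGraph T
  isTree : tree.IsTree
  bag : T → Set G.V
  covers_v : ∀ v : G.V, ∃ t : T, v ∈ bag t
  covers_e : ∀ e : G.E, ∃ (t : T) (x y : G.V), G.ends e = s(x, y) ∧ x ∈ bag t ∧ y ∈ bag t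
  connected : ∀ v : G.V, (SimpleGraph.induce {t : T | v ∈ bag t} tree).Connected

/-- The tree-width of a multigraph. -/
noncomputable def treewidth (G : Multigraph) : ℕ :=
  sInf {n | ∃ D : TreeDecomp G, ∀ t : D.T, (D.bag t).ncard ≤ n + 1}

/-! ### Walls and grids -/

def wallStep (r : ℕ) (a b : Fin r × Fin r) : Prop :=
  (a.1 = b.1 ∧ a.2.val + 1 = b.2.val) ∨
  (a.2 = b.2 ∧ a.1.val + 1 = b.1.val ∧ (a.1.val + 1) % 2 = (a.2.val + 1) % 2)

def wallAdj (r : ℕ) (a b : Fin r × Fin r) : Prop := wallStep r a b ∨ wallStep r b a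

lemma wallStep_ne {r : ℕ} {a b : Fin r × Fin r} (h : wallStep r a b) : a ≠ b := by
  rintro rfl
  rcases h with ⟨-, h⟩ | ⟨-, h, -⟩ <;> omega

/-- The `r`-wall `H_r`. -/
def wall (r : ℕ) : Multigraph where
  V := Fin r × Fin r
  E := {q : Sym2 (Fin r × Fin r) // ∃ a b, q = s(a, b) ∧ wallAdj r a b}
  finV := inferInstance
  finE := inferInstance
  ends := Subtype.val
  no_loops := by
    rintro ⟨q, a, b, rfl, hab⟩ hd
    rw [Sym2.mk_isDiag_iff] at hd
    subst hd
    rcases hab with h | h <;> exact wallStep_ne h rfl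

def gridStep (r : ℕ) (a b : Fin r × Fin r) : Prop :=
  (a.1 = b.1 ∧ a.2.val + 1 = b.2.val) ∨ (a.2 = b.2 ∧ a.1.val + 1 = b.1.val)

def gridAdj (r : ℕ) (a b : Fin r × Fin r) : Prop := gridStep r a b ∨ gridStep r b a

lemma gridStep_ne {r : ℕ} {a b : Fin r × Fin r} (h : gridStep r a b) : a ≠ b := by
  rintro rfl
  rcases h with ⟨-, h⟩ | ⟨-, h⟩ <;> omega

/-- The `r × r` grid. -/
def grid (r : ℕ) : Multigraph where
  V := Fin r × Fin r
  E := {q : Sym2 (Fin r × Fin r) // ∃ a b, q = s(a, b) ∧ gridAdj r a b}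
  finV := inferInstance
  finE := inferInstance
  ends := Subtype.val
  no_loops := by
    rintro ⟨q, a, b, rfl, hab⟩ hd
    rw [Sym2.mk_isDiag_iff] at hd
    subst hd
    rcases hab with h | h <;> exact gridStep_ne h rfl

/-! ### Subdivisions and minors -/

/-- `G` contains `H` as a subdivision: an immersion whose composite paths pairwise
meet only in common endpoints. -/
def ContainsSubdivision (G H : Multigraph) : Prop :=
  ∃ I : WeakImmersion H G, ∀ f f' : H.E, f ≠ f' → ∀ v : G.V,
    v ∈ I.pverts f → v ∈ I.pverts f' →
      ((I.pverts f).head? = some v ∨ (I.pverts f).getLast? = some v) ∧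
      ((I.pverts f').head? = some v ∨ (I.pverts f').getLast? = some v)

/-- A set of vertices is connected in `G`. -/
def ConnectedIn (G : Multigraph) (B : Set G.V) : Prop :=
  B.Nonempty ∧ ∀ a ∈ B, ∀ b ∈ B, ∃ (vs : List G.V) (es : List G.E),
    G.IsWalk vs es ∧ vs.head? = some a ∧ vs.getLast? = some b ∧ ∀ v ∈ vs, v ∈ B

/-- `G` contains `H` as a minor. -/
def HasMinor (G H : Multigraph) : Prop :=
  ∃ B : H.V → Set G.V,
    (∀ x, G.ConnectedIn (B x)) ∧
    (∀ x y, x ≠ y → Disjoint (B x) (B y)) ∧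
    ∃ η : H.E → G.E, Function.Injective η ∧
      ∀ (f : H.E) (x y : H.V), H.ends f = s(x, y) →
        ∃ a b, G.ends (η f) = s(a, b) ∧ a ∈ B x ∧ b ∈ B y

/-! ### Subgraphs, splitting off, suppression -/

/-- `A` is (isomorphic to) a subgraph of `G`. -/
def IsSubgraph (A G : Multigraph) : Prop :=
  ∃ (fv : A.V → G.V) (fe : A.E → G.E), Function.Injective fv ∧ Function.Injective fe ∧
    ∀ e, G.ends (fe e) = Sym2.map fv (A.ends e)

/-- `B` is obtained from `A` by splitting off a pair of incident edges. -/
def SplitOffRel (A B : Multigraph) : Prop :=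
  ∃ (e₁ e₂ : A.E) (x y z : A.V), e₁ ≠ e₂ ∧ x ≠ z ∧
    A.ends e₁ = s(x, y) ∧ A.ends e₂ = s(y, z) ∧
    ∃ (fV : A.V ≃ B.V) (fE : {e : A.E // e ≠ e₁ ∧ e ≠ e₂} ⊕ Unit ≃ B.E),
      (∀ e : {e : A.E // e ≠ e₁ ∧ e ≠ e₂},
        B.ends (fE (Sum.inl e)) = Sym2.map fV (A.ends e.val)) ∧
      B.ends (fE (Sum.inr ())) = s(fV x, fV z)

/-- `B` is obtained from `A` by suppressing a vertex of degree two (contracting one of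
its incident edges and deleting any resulting loops). -/
def SuppressTwoRel (A B : Multigraph) : Prop :=
  ∃ v : A.V, A.degree v = 2 ∧
    ∃ σ : A.V → B.V,
      (∀ x y, x ≠ v → y ≠ v → (σ x = σ y ↔ x = y)) ∧
      (∀ y : B.V, ∃ x, x ≠ v ∧ σ x = y) ∧
      (∃ a, a ≠ v ∧ (∃ e, A.ends e = s(v, a)) ∧ σ v = σ a) ∧
      ∃ τ : {e : A.E // ¬ (Sym2.map σ (A.ends e)).IsDiag} ≃ B.E,
        ∀ e, B.ends (τ e) = Sym2.map σ (A.ends e.val)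

/-- A multigraph together with a marked set of vertices. -/
structure MarkedGraph where
  G : Multigraph
  X : Set G.V

/-- One step of suppressing a vertex outside the marked set of degree at most two
(for degree zero this deletes the vertex). -/
def SuppressStep (A B : MarkedGraph) : Prop :=
  ∃ v : A.G.V, v ∉ A.X ∧ A.G.degree v ≤ 2 ∧
    ∃ σ : A.G.V → B.G.V,
      (∀ x y, x ≠ v → y ≠ v → (σ x = σ y ↔ x = y)) ∧
      (∀ y : B.G.V, ∃ x, x ≠ v ∧ σ x = y) ∧
      B.X = {y | ∃ x, x ∈ A.X ∧ σ x = y} ∧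
      (1 ≤ A.G.degree v → ∃ a, a ≠ v ∧ (∃ e, A.G.ends e = s(v, a)) ∧ σ v = σ a) ∧
      ∃ τ : {e : A.G.E // ¬ (Sym2.map σ (A.G.ends e)).IsDiag} ≃ B.G.E,
        ∀ e, B.G.ends (τ e) = Sym2.map σ (A.G.ends e.val)

/-! ### Trees and cycles as multigraphs -/

/-- A multigraph is a tree if it corresponds to a simple tree on its vertex set. -/
def IsTreeGraph (G : Multigraph) : Prop :=
  ∃ S : SimpleGraph G.V, S.IsTree ∧ ∃ φ : G.E ≃ S.edgeSet, ∀ e, (φ e : Sym2 G.V) = G.ends e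

/-- The cycle on `n + 3` vertices. -/
def cycleGraph (n : ℕ) : Multigraph where
  V := Fin (n + 3)
  E := Fin (n + 3)
  finV := inferInstance
  finE := inferInstance
  ends := fun i => s(i, i + 1)
  no_loops := by
    intro i hd
    rw [Sym2.mk_isDiag_iff] at hd
    have h1 : (i : Fin (n + 3)) + 0 = i + 1 := by simpa using hd
    have h01 : (0 : Fin (n + 3)) = 1 := add_left_cancel h1
    have := congrArg Fin.val h01
    simp [Fin.val_one] at this

/-- A matching in a multigraph: a set of pairwise vertex-disjoint edges. -/
def IsMatching (G : Multigraph) (M : Set G.E) : Prop :=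
  ∀ e ∈ M, ∀ e' ∈ M, e ≠ e' → ∀ v : G.V, v ∈ G.ends e → v ∉ G.ends e'

/-! ### Auxiliary material for the edge-sum theorem -/

lemma sym2_exists_pair {α : Type*} (z : Sym2 α) : ∃ x y, z = s(x, y) := by
  induction z using Sym2.ind with
  | _ x y => exact ⟨x, y, rfl⟩

namespace EdgeSumWitness

variable {k : ℕ} {G G₁ G₂ : Multigraph} (w : EdgeSumWitness k G G₁ G₂)

/-- Side-1 predicate (as a `Bool`). -/
def side1 (v : G.V) : Bool := (w.α v).isLeft

/-- Translation of vertices into `G₁` (side-2 vertices all go to `v₁`). -/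
noncomputable def toV1 (v : G.V) : G₁.V :=
  match w.α v with
  | Sum.inl x => x.val
  | Sum.inr _ => w.v₁

/-- Translation of edges into `G₁`; `d` is a default value for side-2-internal
edges (never used). -/
noncomputable def toE1 (d : G₁.E) (e : G.E) : G₁.E :=
  match w.β e with
  | Sum.inl (Sum.inl e₁) => e₁.val
  | Sum.inl (Sum.inr _) => d
  | Sum.inr e₁ => e₁.val

/-- A "good" edge is one that is not internal to side 2. -/
def good (e : G.E) : Prop := ∀ e₂, w.β e ≠ Sum.inl (Sum.inr e₂)

lemma side1_symm_inl (x : {x : G₁.V // x ≠ w.v₁}) :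
    w.side1 (w.α.symm (Sum.inl x)) = true := by
  simp [side1]

lemma side1_symm_inr (y : {y : G₂.V // y ≠ w.v₂}) :
    w.side1 (w.α.symm (Sum.inr y)) = false := by
  simp [side1]

lemma toV1_symm_inl (x : {x : G₁.V // x ≠ w.v₁}) :
    w.toV1 (w.α.symm (Sum.inl x)) = x.val := by
  simp [toV1]

lemma toV1_ne {v : G.V} (hv : w.side1 v = true) : w.toV1 v ≠ w.v₁ := by
  unfold side1 at hv
  unfold toV1
  rcases h : w.α v with x | y
  · simp only []
    exact x.prop
  · rw [h] at hv; simp at hv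

lemma toV1_inj {u v : G.V} (hu : w.side1 u = true) (hv : w.side1 v = true)
    (h : w.toV1 u = w.toV1 v) : u = v := by
  unfold side1 at hu hv
  unfold toV1 at h
  rcases hu' : w.α u with x | y
  · rcases hv' : w.α v with x' | y'
    · rw [hu', hv'] at h
      simp only [] at h
      have : w.α u = w.α v := by rw [hu', hv']; exact congrArg _ (Subtype.ext h)
      exact w.α.injective this
    · rw [hv'] at hv; simp at hv
  · rw [hu'] at hu; simp at hu

lemma _root_.Multigraph.exists_other {H : Multigraph} {v : H.V} (e : H.E)
    (h : v ∈ H.ends e) : ∃ x, x ≠ v ∧ H.ends e = s(x, v) := by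
  obtain ⟨x, y, hxy⟩ := sym2_exists_pair (H.ends e)
  have hne : x ≠ y := by
    intro h'
    exact H.no_loops e (by rw [hxy, h']; exact Sym2.mk_isDiag_iff.2 rfl)
  rw [hxy] at h ⊢
  rcases Sym2.mem_iff.1 h with rfl | rfl
  · exact ⟨y, Ne.symm hne, Sym2.eq_swap⟩
  · exact ⟨x, hne, rfl⟩

section classify

variable {e : G.E} {u v : G.V}

lemma case_inl_inl {e₁} (hb : w.β e = Sum.inl (Sum.inl e₁)) (h : G.ends e = s(u, v)) :
    ∃ (x y : G₁.V) (hx : x ≠ w.v₁) (hy : y ≠ w.v₁), G₁.ends e₁.val = s(x, y) ∧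
      ((u = w.α.symm (Sum.inl ⟨x, hx⟩) ∧ v = w.α.symm (Sum.inl ⟨y, hy⟩)) ∨
       (u = w.α.symm (Sum.inl ⟨y, hy⟩) ∧ v = w.α.symm (Sum.inl ⟨x, hx⟩))) := by
  obtain ⟨x, y, hxy⟩ := sym2_exists_pair (G₁.ends e₁.val)
  have hx : x ≠ w.v₁ := fun hh => e₁.prop (by rw [hxy, ← hh]; exact Sym2.mem_mk_left _ _)
  have hy : y ≠ w.v₁ := fun hh => e₁.prop (by rw [hxy, ← hh]; exact Sym2.mem_mk_right _ _)
  have h1 := w.ends₁ e₁ x y hx hy hxy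
  have hbe : w.β.symm (Sum.inl (Sum.inl e₁)) = e := by rw [← hb]; exact w.β.symm_apply_apply e
  rw [hbe, h] at h1
  rcases Sym2.eq_iff.1 h1 with ⟨h2, h3⟩ | ⟨h2, h3⟩
  · exact ⟨x, y, hx, hy, hxy, Or.inl ⟨h2, h3⟩⟩
  · exact ⟨x, y, hx, hy, hxy, Or.inr ⟨h2, h3⟩⟩

lemma case_inl_inr {e₂} (hb : w.β e = Sum.inl (Sum.inr e₂)) (h : G.ends e = s(u, v)) :
    w.side1 u = false ∧ w.side1 v = false := by
  obtain ⟨x, y, hxy⟩ := sym2_exists_pair (G₂.ends e₂.val)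
  have hx : x ≠ w.v₂ := fun hh => e₂.prop (by rw [hxy, ← hh]; exact Sym2.mem_mk_left _ _)
  have hy : y ≠ w.v₂ := fun hh => e₂.prop (by rw [hxy, ← hh]; exact Sym2.mem_mk_right _ _)
  have h1 := w.ends₂ e₂ x y hx hy hxy
  have hbe : w.β.symm (Sum.inl (Sum.inr e₂)) = e := by rw [← hb]; exact w.β.symm_apply_apply e
  rw [hbe, h] at h1
  rcases Sym2.eq_iff.1 h1 with ⟨h2, h3⟩ | ⟨h2, h3⟩ <;>
    simp [h2, h3, side1_symm_inr]

lemma case_inr {e₁} (hb : w.β e = Sum.inr e₁) (h : G.ends e = s(u, v)) :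
    ∃ (x : G₁.V) (hx : x ≠ w.v₁), G₁.ends e₁.val = s(x, w.v₁) ∧
      ((u = w.α.symm (Sum.inl ⟨x, hx⟩) ∧ w.side1 v = false) ∨
       (v = w.α.symm (Sum.inl ⟨x, hx⟩) ∧ w.side1 u = false)) := by
  obtain ⟨x, hx, hxe⟩ := Multigraph.exists_other (H := G₁) e₁.val e₁.prop
  obtain ⟨y, hy, hye⟩ := Multigraph.exists_other (H := G₂) (w.π e₁).val (w.π e₁).prop
  have h1 := w.ends₃ e₁ x y hx hy hxe hye
  have hbe : w.β.symm (Sum.inr e₁) = e := by rw [← hb]; exact w.β.symm_apply_apply e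
  rw [hbe, h] at h1
  rcases Sym2.eq_iff.1 h1 with ⟨h2, h3⟩ | ⟨h2, h3⟩
  · exact ⟨x, hx, hxe, Or.inl ⟨h2, by rw [h3]; exact w.side1_symm_inr _⟩⟩
  · exact ⟨x, hx, hxe, Or.inr ⟨h3, by rw [h2]; exact w.side1_symm_inr _⟩⟩

lemma good_of_left (h : G.ends e = s(u, v)) (hu : w.side1 u = true) : w.good e := by
  intro e₂ hb
  have := (w.case_inl_inr hb h).1
  rw [hu] at this; exact Bool.true_eq_false.mp this

lemma cut_of_cross (h : G.ends e = s(u, v)) (hu : w.side1 u = true)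
    (hv : w.side1 v = false) : ∃ e₁, w.β e = Sum.inr e₁ := by
  rcases hb : w.β e with (e₁ | e₂) | e₁
  · obtain ⟨x, y, hx, hy, -, hc⟩ := w.case_inl_inl hb h
    rcases hc with ⟨-, h3⟩ | ⟨-, h3⟩ <;>
      · rw [h3, w.side1_symm_inl] at hv; simp at hv
  · have := (w.case_inl_inr hb h).1
    rw [hu] at this; exact absurd this (by simp)
  · exact ⟨e₁, rfl⟩

lemma endsE1_of_both (d : G₁.E) (h : G.ends e = s(u, v)) (hu : w.side1 u = true)
    (hv : w.side1 v = true) : G₁.ends (w.toE1 d e) = s(w.toV1 u, w.toV1 v) := by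
  rcases hb : w.β e with (e₁ | e₂) | e₁
  · obtain ⟨x, y, hx, hy, hxy, hc⟩ := w.case_inl_inl hb h
    have : w.toE1 d e = e₁.val := by simp [toE1, hb]
    rw [this, hxy]
    rcases hc with ⟨h2, h3⟩ | ⟨h2, h3⟩ <;> rw [h2, h3, w.toV1_symm_inl, w.toV1_symm_inl]
    exact Sym2.eq_swap.symm
  · have := (w.case_inl_inr hb h).1
    rw [hu] at this; exact absurd this (by simp)
  · obtain ⟨x, hx, hxe, hc⟩ := w.case_inr hb h
    rcases hc with ⟨-, h3⟩ | ⟨h2, h3⟩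
    · rw [hv] at h3; exact absurd h3 (by simp)
    · rw [hu] at h3; exact absurd h3 (by simp)

lemma endsE1_of_cross (d : G₁.E) (h : G.ends e = s(u, v)) (hu : w.side1 u = true)
    (hv : w.side1 v = false) : G₁.ends (w.toE1 d e) = s(w.toV1 u, w.v₁) := by
  obtain ⟨e₁, hb⟩ := w.cut_of_cross h hu hv
  obtain ⟨x, hx, hxe, hc⟩ := w.case_inr hb h
  have hte : w.toE1 d e = e₁.val := by simp [toE1, hb]
  rcases hc with ⟨h2, -⟩ | ⟨h2, h3⟩
  · rw [hte, hxe, h2, w.toV1_symm_inl]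
  · rw [hu] at h3; exact absurd h3 (by simp)

lemma toE1_inj (d : G₁.E) {e e' : G.E} (he : w.good e) (he' : w.good e')
    (h : w.toE1 d e = w.toE1 d e') : e = e' := by
  rcases hb : w.β e with (e₁ | e₂) | e₁ <;> rcases hb' : w.β e' with (e₁' | e₂') | e₁'
  all_goals first
    | exact absurd hb (he _)
    | exact absurd hb' (he' _)
    | skip
  · rw [show w.toE1 d e = e₁.val by simp [toE1, hb],
      show w.toE1 d e' = e₁'.val by simp [toE1, hb']] at h
    exact w.β.injective (by rw [hb, hb', Subtype.ext h])
  · rw [show w.toE1 d e = e₁.val by simp [toE1, hb],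
      show w.toE1 d e' = e₁'.val by simp [toE1, hb']] at h
    exact absurd (h ▸ e₁'.prop) e₁.prop
  · rw [show w.toE1 d e = e₁.val by simp [toE1, hb],
      show w.toE1 d e' = e₁'.val by simp [toE1, hb']] at h
    exact absurd (h ▸ e₁.prop) e₁'.prop
  · rw [show w.toE1 d e = e₁.val by simp [toE1, hb],
      show w.toE1 d e' = e₁'.val by simp [toE1, hb']] at h
    exact w.β.injective (by rw [hb, hb', Subtype.ext h])

end classify

end EdgeSumWitness

/-- Extract the suffix of a walk starting at a given vertex. -/
lemma IsWalk.suffix_from {G : Multigraph} {vs : List G.V} {es : List G.E}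
    (hw : G.IsWalk vs es) : ∀ v ∈ vs,
    ∃ vs₂ es₂, G.IsWalk vs₂ es₂ ∧ vs₂.head? = some v ∧ vs₂.getLast? = vs.getLast? ∧
      vs₂.Sublist vs ∧ es₂.Sublist es := by
  induction hw with
  | nil x =>
    intro v hv
    simp only [List.mem_singleton] at hv
    subst hv
    exact ⟨[v], [], .nil v, rfl, rfl, List.Sublist.refl _, List.Sublist.refl _⟩
  | @cons v' vs es u e he hw ih =>
    intro x hx
    by_cases hvu : x = u
    · subst hvu
      exact ⟨x :: v' :: vs, e :: es, .cons x e he hw, rfl, rfl,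
        List.Sublist.refl _, List.Sublist.refl _⟩
    · have hx' : x ∈ v' :: vs := by
        rcases List.mem_cons.1 hx with h | h
        · exact absurd h hvu
        · exact h
      obtain ⟨vs₂, es₂, hw₂, hh₂, hl₂, hsv, hse⟩ := ih x hx'
      exact ⟨vs₂, es₂, hw₂, hh₂, by rw [hl₂, List.getLast?_cons_cons],
        hsv.cons u, hse.cons e⟩

namespace EdgeSumWitness

variable {k : ℕ} {G G₁ G₂ : Multigraph} (w : EdgeSumWitness k G G₁ G₂)

/-- Vertex translation sending all of side 2 to `v₁`. -/
noncomputable def toV1' (v : G.V) : G₁.V :=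
  if w.side1 v = true then w.toV1 v else w.v₁

lemma toV1'_pos {v : G.V} (h : w.side1 v = true) : w.toV1' v = w.toV1 v := if_pos h

lemma toV1'_neg {v : G.V} (h : w.side1 v = false) : w.toV1' v = w.v₁ :=
  if_neg (by rw [h]; simp)

lemma endsE1_left (d : G₁.E) {e : G.E} {u v : G.V} (h : G.ends e = s(u, v))
    (hu : w.side1 u = true) :
    G₁.ends (w.toE1 d e) = s(w.toV1 u, w.toV1' v) := by
  cases hsv : w.side1 v
  · rw [w.toV1'_neg hsv]; exact w.endsE1_of_cross d h hu hsv
  · rw [w.toV1'_pos hsv]; exact w.endsE1_of_both d h hu hsv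

/-- The main transformation: a path in `G` becomes a path in `G₁`, rerouting
side-2 excursions through `v₁`. -/
lemma walk_transform (d : G₁.E) {vs : List G.V} {es : List G.E}
    (hw : G.IsWalk vs es) (hnd : vs.Nodup) :
    ∃ vs' es', G₁.IsWalk vs' es' ∧ vs'.Nodup ∧
      vs'.head? = vs.head?.map w.toV1' ∧
      vs'.getLast? = vs.getLast?.map w.toV1' ∧
      (∀ e ∈ es', ∃ b ∈ es, w.good b ∧ w.toE1 d b = e) ∧
      (∀ x ∈ vs', x = w.v₁ ∨ ∃ u ∈ vs, w.side1 u = true ∧ x = w.toV1 u) := by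
  induction hw with
  | nil x =>
    refine ⟨[w.toV1' x], [], .nil _, List.nodup_singleton _, rfl, rfl, by simp, ?_⟩
    intro y hy
    simp only [List.mem_singleton] at hy
    subst hy
    cases hsx : w.side1 x
    · exact Or.inl (w.toV1'_neg hsx)
    · exact Or.inr ⟨x, List.mem_singleton_self x, hsx, w.toV1'_pos hsx⟩
  | @cons v vs es u e he hw ih =>
    have hnd' : (v :: vs).Nodup := (List.nodup_cons.1 hnd).2
    have hu_nm : u ∉ v :: vs := (List.nodup_cons.1 hnd).1
    obtain ⟨vs', es', ihw, ihn, ihh, ihl, ihe, ihv⟩ := ih hnd'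
    obtain ⟨a, vs'', rfl⟩ : ∃ a t, vs' = a :: t := by
      cases vs' with
      | nil => simp at ihh
      | cons a t => exact ⟨a, t, rfl⟩
    have ha : a = w.toV1' v := by
      simp only [List.head?_cons, List.head?_cons, Option.map_some] at ihh
      exact Option.some.inj ihh
    cases hsu : w.side1 u
    · -- u on side 2
      by_cases hmem : w.v₁ ∈ a :: vs''
      · -- take the suffix of the transformed walk from v₁
        obtain ⟨vs₂, es₂, hw₂, hh₂, hl₂, hsv, hse⟩ := ihw.suffix_from w.v₁ hmem
        refine ⟨vs₂, es₂, hw₂, ihn.sublist hsv, ?_, ?_, ?_, ?_⟩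
        · rw [hh₂]; simp [w.toV1'_neg hsu]
        · rw [hl₂, ihl, List.getLast?_cons_cons]
        · intro x hx
          obtain ⟨b, hb, hgb, htb⟩ := ihe x (hse.mem hx)
          exact ⟨b, List.mem_cons_of_mem e hb, hgb, htb⟩
        · intro x hx
          rcases ihv x (hsv.mem hx) with h | ⟨y, hy, hsy, hxy⟩
          · exact Or.inl h
          · exact Or.inr ⟨y, List.mem_cons_of_mem u hy, hsy, hxy⟩
      · -- v₁ is fresh: prepend the crossing edge
        have hsv : w.side1 v = true := by
          cases hsv : w.side1 v
          · exact absurd (by rw [ha, w.toV1'_neg hsv]; exact List.mem_cons_self) hmem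
          · rfl
        have hends : G₁.ends (w.toE1 d e) = s(w.v₁, a) := by
          rw [ha, w.toV1'_pos hsv]
          have := w.endsE1_of_cross d (he.trans Sym2.eq_swap) hsv hsu
          rw [this]; exact Sym2.eq_swap
        refine ⟨w.v₁ :: a :: vs'', w.toE1 d e :: es',
          .cons w.v₁ (w.toE1 d e) hends ihw, List.nodup_cons.2 ⟨hmem, ihn⟩, ?_, ?_, ?_, ?_⟩
        · simp [w.toV1'_neg hsu]
        · rw [List.getLast?_cons_cons, ihl, List.getLast?_cons_cons]
        · intro x hx
          rcases List.mem_cons.1 hx with rfl | hx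
          · exact ⟨e, List.mem_cons_self,
              w.good_of_left (he.trans Sym2.eq_swap) hsv, rfl⟩
          · obtain ⟨b, hb, hgb, htb⟩ := ihe x hx
            exact ⟨b, List.mem_cons_of_mem e hb, hgb, htb⟩
        · intro x hx
          rcases List.mem_cons.1 hx with rfl | hx
          · exact Or.inl rfl
          · rcases ihv x hx with h | ⟨y, hy, hsy, hxy⟩
            · exact Or.inl h
            · exact Or.inr ⟨y, List.mem_cons_of_mem u hy, hsy, hxy⟩
    · -- u on side 1: prepend (toV1 u, toE1 e)
      have hends : G₁.ends (w.toE1 d e) = s(w.toV1 u, a) := by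
        rw [ha]; exact w.endsE1_left d he hsu
      have hfresh : w.toV1 u ∉ a :: vs'' := by
        intro hx
        rcases ihv _ hx with h | ⟨y, hy, hsy, hxy⟩
        · exact w.toV1_ne hsu h
        · exact hu_nm (w.toV1_inj hsu hsy hxy ▸ hy)
      refine ⟨w.toV1 u :: a :: vs'', w.toE1 d e :: es',
        .cons (w.toV1 u) (w.toE1 d e) hends ihw, List.nodup_cons.2 ⟨hfresh, ihn⟩, ?_, ?_, ?_, ?_⟩
      · simp [w.toV1'_pos hsu]
      · rw [List.getLast?_cons_cons, ihl, List.getLast?_cons_cons]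
      · intro x hx
        rcases List.mem_cons.1 hx with rfl | hx
        · exact ⟨e, List.mem_cons_self, w.good_of_left he hsu, rfl⟩
        · obtain ⟨b, hb, hgb, htb⟩ := ihe x hx
          exact ⟨b, List.mem_cons_of_mem e hb, hgb, htb⟩
      · intro x hx
        rcases List.mem_cons.1 hx with rfl | hx
        · exact Or.inr ⟨u, List.mem_cons_self, hsu, rfl⟩
        · rcases ihv x hx with h | ⟨y, hy, hsy, hxy⟩
          · exact Or.inl h
          · exact Or.inr ⟨y, List.mem_cons_of_mem u hy, hsy, hxy⟩

lemma immerses_of_few (hk : 1 ≤ k) {t : ℕ} (I : WeakImmersion (completeGraph t) G)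
    (hfew : ∀ i j : Fin t, w.side1 (I.vmap i) = false → w.side1 (I.vmap j) = false → i = j) :
    G₁.Immerses (completeGraph t) := by
  classical
  have hne : Nonempty {e : G₁.E // w.v₁ ∈ G₁.ends e} := by
    have h := w.deg₁
    simp only [Multigraph.degree] at h
    exact (Nat.card_pos_iff.1 (by rw [h]; omega)).1
  obtain ⟨d0⟩ := hne
  set d : G₁.E := d0.val with hd
  choose xf yf hends hpath using I.is_path
  choose vs' es' hwalk hnodup hhead hlast hedge hvert using
    fun f => w.walk_transform d (hpath f).1 (hpath f).2.1
  refine ⟨⟨fun i => w.toV1' (I.vmap i), ?_, vs', es', ?_, ?_⟩⟩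
  · intro i j hij0
    have hij : w.toV1' (I.vmap i) = w.toV1' (I.vmap j) := hij0
    cases hsi : w.side1 (I.vmap i) <;> cases hsj : w.side1 (I.vmap j)
    · exact hfew i j hsi hsj
    · rw [w.toV1'_neg hsi, w.toV1'_pos hsj] at hij
      exact absurd hij.symm (w.toV1_ne hsj)
    · rw [w.toV1'_pos hsi, w.toV1'_neg hsj] at hij
      exact absurd hij (w.toV1_ne hsi)
    · rw [w.toV1'_pos hsi, w.toV1'_pos hsj] at hij
      exact I.vmap_inj (w.toV1_inj hsi hsj hij)
  · intro f
    refine ⟨xf f, yf f, hends f, hwalk f, hnodup f, ?_, ?_⟩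
    · rw [hhead f, (hpath f).2.2.1, Option.map_some]
    · rw [hlast f, (hpath f).2.2.2, Option.map_some]
  · intro f f' hff' e hef hef'
    obtain ⟨b, hb, hgb, htb⟩ := hedge f e hef
    obtain ⟨b', hb', hgb', htb'⟩ := hedge f' e hef'
    have hbb : b = b' := w.toE1_inj d hgb hgb' (htb.trans htb'.symm)
    exact I.edge_disjoint f f' hff' b hb (hbb ▸ hb')

/-- The swapped witness, exchanging the roles of `G₁` and `G₂`. -/
def swap (w : EdgeSumWitness k G G₁ G₂) : EdgeSumWitness k G G₂ G₁ where
  v₁ := w.v₂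
  v₂ := w.v₁
  deg₁ := w.deg₂
  deg₂ := w.deg₁
  π := w.π.symm
  α := w.α.trans (Equiv.sumComm _ _)
  β := w.β.trans (Equiv.sumCongr (Equiv.sumComm _ _) w.π)
  ends₁ := by
    intro e x y hx hy hxy
    have h1 := w.ends₂ e x y hx hy hxy
    simpa [Equiv.symm_trans_apply] using h1
  ends₂ := by
    intro e x y hx hy hxy
    have h1 := w.ends₁ e x y hx hy hxy
    simpa [Equiv.symm_trans_apply] using h1
  ends₃ := by
    intro e x y hx hy h₁ h₂
    have h3 := w.ends₃ (w.π.symm e) y x hy hx h₂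
      (by rw [Equiv.apply_symm_apply]; exact h₁)
    rw [Sym2.eq_swap] at h3
    simpa [Equiv.symm_trans_apply] using h3

lemma swap_side1 (v : G.V) : w.swap.side1 v = !(w.side1 v) := by
  show (Equiv.sumComm _ _ (w.α v)).isLeft = !(w.α v).isLeft
  cases w.α v <;> rfl

lemma exists_cut_edge {vs : List G.V} {es : List G.E} (hw : G.IsWalk vs es) :
    ∀ a b, vs.head? = some a → vs.getLast? = some b → w.side1 a ≠ w.side1 b →
    ∃ e ∈ es, ∃ e₁, w.β e = Sum.inr e₁ := by
  induction hw with
  | nil x =>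
    intro a b ha hb hne
    simp only [List.head?_cons, List.getLast?_singleton] at ha hb
    rw [← Option.some.inj ha, ← Option.some.inj hb] at hne
    exact absurd rfl hne
  | @cons v vs es u e he hw ih =>
    intro a b ha hb hne
    have hau : a = u := by simpa using ha.symm
    subst hau
    have hb' : (v :: vs).getLast? = some b := by rw [← List.getLast?_cons_cons (a := a)]; exact hb
    by_cases hsv : w.side1 a = w.side1 v
    · obtain ⟨e', he', hc⟩ := ih v b rfl hb' (fun hh => hne (hsv.trans hh))
      exact ⟨e', List.mem_cons_of_mem e he', hc⟩
    · cases hsa : w.side1 a <;> cases hsvv : w.side1 v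
      · rw [hsa, hsvv] at hsv; exact absurd rfl hsv
      · obtain ⟨e₁, hc⟩ := w.cut_of_cross (he.trans Sym2.eq_swap) hsvv hsa
        exact ⟨e, List.mem_cons_self, e₁, hc⟩
      · obtain ⟨e₁, hc⟩ := w.cut_of_cross he hsa hsvv
        exact ⟨e, List.mem_cons_self, e₁, hc⟩
      · rw [hsa, hsvv] at hsv; exact absurd rfl hsv

lemma few_or_few (hkt : k < t) (I : WeakImmersion (completeGraph t) G) :
    (∀ i j : Fin t, w.side1 (I.vmap i) = false → w.side1 (I.vmap j) = false → i = j) ∨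
    (∀ i j : Fin t, w.side1 (I.vmap i) = true → w.side1 (I.vmap j) = true → i = j) := by
  classical
  by_contra hc
  push_neg at hc
  obtain ⟨⟨i₂, j₂, hi₂, hj₂, hne₂⟩, ⟨i₁, j₁, hi₁, hj₁, hne₁⟩⟩ := hc
  set p : Fin t → Prop := fun i => w.side1 (I.vmap i) = true with hp
  -- the cut has k edges
  have hcut : Nat.card {e₁ : G₁.E // w.v₁ ∈ G₁.ends e₁} = k := by
    have h := w.deg₁; simpa [Multigraph.degree] using h
  -- key: every crossing pair yields a cut edge on the connecting path
  have key : ∀ q : {i // p i} × {i // ¬ p i},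
      ∃ (f : (completeGraph t).E) (e : G.E) (e₁ : {e₁ : G₁.E // w.v₁ ∈ G₁.ends e₁}),
        f.val = s(q.1.val, q.2.val) ∧ e ∈ I.pedges f ∧ w.β e = Sum.inr e₁ := by
    rintro ⟨⟨i, hi⟩, ⟨j, hj⟩⟩
    have hij : i ≠ j := fun h => hj (h ▸ hi)
    refine ⟨⟨s(i, j), by simpa [completeGraph, Sym2.mk_isDiag_iff] using hij⟩, ?_⟩
    obtain ⟨x, y, hxy, hpath⟩ := I.is_path ⟨s(i, j), by
      simpa [completeGraph, Sym2.mk_isDiag_iff] using hij⟩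
    have hxy' : s(i, j) = s(x, y) := hxy
    have hsx : w.side1 (I.vmap x) ≠ w.side1 (I.vmap y) := by
      have hjx : w.side1 (I.vmap j) = false := by
        simp only [hp] at hj; revert hj; cases w.side1 (I.vmap j) <;> simp
      rcases Sym2.eq_iff.1 hxy' with ⟨h1, h2⟩ | ⟨h1, h2⟩
      · rw [← h1, ← h2, hi, hjx]; simp
      · rw [← h1, ← h2, hi, hjx]; simp
    obtain ⟨e, hee, e₁, hbe⟩ := w.exists_cut_edge hpath.1 (I.vmap x) (I.vmap y)
      hpath.2.2.1 hpath.2.2.2 hsx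
    exact ⟨e, e₁, rfl, hee, hbe⟩
  choose fE eE e1E hfq heq hbq using key
  -- injectivity
  have hinj : Function.Injective e1E := by
    intro q q' hqq
    have hee : eE q = eE q' := w.β.injective (by rw [hbq q, hbq q', hqq])
    have hff : fE q = fE q' := by
      by_contra hff
      exact I.edge_disjoint _ _ hff (eE q) (heq q) (hee ▸ heq q')
    have hs : s(q.1.val, q.2.val) = s(q'.1.val, q'.2.val) := by
      rw [← hfq q, ← hfq q', hff]
    rcases Sym2.eq_iff.1 hs with ⟨h1, h2⟩ | ⟨h1, h2⟩
    · exact Prod.ext (Subtype.ext h1) (Subtype.ext h2)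
    · exact absurd (h1 ▸ q.1.prop) q'.2.prop
  have hle : Nat.card ({i // p i} × {i // ¬ p i}) ≤ k := by
    rw [← hcut]
    exact Nat.card_le_card_of_injective e1E hinj
  rw [Nat.card_prod] at hle
  have hS1 : 1 < Nat.card {i // p i} := by
    rw [Finite.one_lt_card_iff_nontrivial]
    exact ⟨⟨i₁, hi₁⟩, ⟨j₁, hj₁⟩, fun h => hne₁ (congrArg Subtype.val h)⟩
  have hS2 : 1 < Nat.card {i // ¬ p i} := by
    rw [Finite.one_lt_card_iff_nontrivial]
    have hi₂' : ¬ p i₂ := by simp only [hp]; rw [hi₂]; simp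
    have hj₂' : ¬ p j₂ := by simp only [hp]; rw [hj₂]; simp
    exact ⟨⟨i₂, hi₂'⟩, ⟨j₂, hj₂'⟩, fun h => hne₂ (congrArg Subtype.val h)⟩
  have hsum : Nat.card {i // p i} + Nat.card {i // ¬ p i} = t := by
    have hcong := Nat.card_congr (Equiv.sumCompl p)
    rw [Nat.card_sum] at hcong
    simpa using hcong
  nlinarith [hle, hS1, hS2, hsum, hkt]

end EdgeSumWitness

end Multigraph

open Multigraph in
/-- an edge sum of order `k < t` immersing `K_t` implies one of the
summands immerses `K_t`. -/
theorem summand_immerses_clique_of_edgeSum (k t : ℕ) (hk : 1 ≤ k) (hkt : k < t)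
    (G G₁ G₂ : Multigraph) (hsum : IsEdgeSum k G G₁ G₂)
    (h : G.Immerses (completeGraph t)) :
    G₁.Immerses (completeGraph t) ∨ G₂.Immerses (completeGraph t) := by
  obtain ⟨w⟩ := hsum
  obtain ⟨I⟩ := h
  rcases w.few_or_few hkt I with hA | hB
  · exact Or.inl (w.immerses_of_few hk I hA)
  · refine Or.inr (w.swap.immerses_of_few hk I ?_)
    intro i j hi hj
    rw [w.swap_side1] at hi hj
    refine hB i j ?_ ?_
    · revert hi; cases w.side1 (I.vmap i) <;> simp
    · revert hj; cases w.side1 (I.vmap j) <;> simp
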